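/- Let I ⊂ (0,∞) be an open interval and let w : I → ℝ be a differentiable solution of w'(r) = (2w(r)³ + 2w(r) − √3(1 + w(r)²)^{3/2})/r with w(r) < √3 for all r ∈ I. Then there exists a constant C > 0 such that √3 − 2w(r)/(1 + w(r)²)^{1/2} = C²·r² for all r ∈ I. -/

import Mathlib

/-- any differentiable solution of `w' = (2w³ + 2w − √3(1+w²)^{3/2})/r` on an
open interval `I ⊆ (0,∞)` with `w < √3` satisfies the first integral
`√3 − 2w/√(1+w²) = C²r²` for some constant `C > 0`. -/
theorem stmt_7 (a b : ℝ) (I : Set ℝ) (hI : I = Set.Ioo a b) (hIpos : I ⊆ Set.Ioi 0)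
    (w : ℝ → ℝ)
    (hw : ∀ r ∈ I, HasDerivAt w
      ((2 * (w r) ^ 3 + 2 * w r - Real.sqrt 3 * (Real.sqrt (1 + (w r) ^ 2)) ^ 3) / r) r)
    (hlt : ∀ r ∈ I, w r < Real.sqrt 3) :
    ∃ C : ℝ, 0 < C ∧ ∀ r ∈ I,
      Real.sqrt 3 - 2 * w r / Real.sqrt (1 + (w r) ^ 2) = C ^ 2 * r ^ 2 := by
  by_cases hab : a < b
  · -- the interval is nonempty
    set φ : ℝ → ℝ := fun r => (Real.sqrt 3 - 2 * w r / Real.sqrt (1 + (w r) ^ 2)) / r ^ 2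
      with hφ
    -- φ has derivative 0 everywhere on I
    have hderiv : ∀ r ∈ I, HasDerivAt φ 0 r := by
      intro r hr
      have hr0 : (0:ℝ) < r := hIpos hr
      have h1 := hw r hr
      have hpos : (0:ℝ) < 1 + w r ^ 2 := by positivity
      have hs0 : 0 < Real.sqrt (1 + w r ^ 2) := Real.sqrt_pos.mpr hpos
      have hs2 : Real.sqrt (1 + w r ^ 2) ^ 2 = 1 + w r ^ 2 := Real.sq_sqrt hpos.le
      have h2 : HasDerivAt (fun r => 1 + w r ^ 2)
          ((2:ℕ) * w r ^ 1 *
            ((2 * (w r) ^ 3 + 2 * w r -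
              Real.sqrt 3 * (Real.sqrt (1 + (w r) ^ 2)) ^ 3) / r)) r :=
        (h1.pow 2).const_add 1
      have h3 := (Real.hasDerivAt_sqrt (ne_of_gt hpos)).comp r h2
      have h4 := ((h1.const_mul 2).div h3 (ne_of_gt hs0)).const_sub (Real.sqrt 3)
      have h5 := h4.div (hasDerivAt_pow 2 r) (by positivity)
      refine h5.congr_deriv ?_
      symm
      simp only [Function.comp, Pi.div_apply]
      field_simp
      linear_combination ((4*r*w r^3 - 4*r^3*Real.sqrt 3 - 4*r^3*Real.sqrt 3*w r^2) + (2*r*Real.sqrt 3 + 2*r*Real.sqrt 3*w r^2 - 8*r^3*w r - 8*r^3*w r^3)*Real.sqrt (1 + w r ^ 2) + (-4*r^3*Real.sqrt 3*w r^2)*(Real.sqrt (1 + w r ^ 2)^2 + (1 + w r ^ 2)) + (-2*r*Real.sqrt 3)*(Real.sqrt (1 + w r ^ 2)^3 + (1 + w r ^ 2)*Real.sqrt (1 + w r ^ 2)) + (4*r^3*Real.sqrt 3)*(Real.sqrt (1 + w r ^ 2)^4 + (1 + w r ^ 2)*Real.sqrt (1 + w r ^ 2)^2 + (1 + w r ^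 2)^2) + (4*r^3*Real.sqrt 3*(1 + w r ^ 2) + 8*r^3*w r*(1 + w r ^ 2)*Real.sqrt (1 + w r ^ 2) + 4*r^3*Real.sqrt 3*w r^2*(Real.sqrt (1 + w r ^ 2)^2 + (1 + w r ^ 2)) + (-4*r^3*Real.sqrt 3)*(Real.sqrt (1 + w r ^ 2)^4 + (1 + w r ^ 2)*Real.sqrt (1 + w r ^ 2)^2 + (1 + w r ^ 2)^2))) * hs2
    -- positivity of √3 - 2w/√(1+w²) on I
    have hval : ∀ r ∈ I, 0 < Real.sqrt 3 - 2 * w r / Real.sqrt (1 + (w r) ^ 2) := by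
      intro r hr
      have hpos : (0:ℝ) < 1 + w r ^ 2 := by positivity
      have hs0 : 0 < Real.sqrt (1 + w r ^ 2) := Real.sqrt_pos.mpr hpos
      have h3 : (0:ℝ) < Real.sqrt 3 := Real.sqrt_pos.mpr (by norm_num)
      rcases le_or_gt (w r) 0 with hw0 | hw0
      · have : 2 * w r / Real.sqrt (1 + w r ^ 2) ≤ 0 :=
          div_nonpos_of_nonpos_of_nonneg (by linarith) hs0.le
        linarith
      · have hw3 : w r ^ 2 < 3 := by
          have := hlt r hr
          nlinarith [Real.sq_sqrt (show (0:ℝ) ≤ 3 by norm_num), hw0]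
        have key : 2 * w r < Real.sqrt 3 * Real.sqrt (1 + w r ^ 2) := by
          rw [← Real.sqrt_mul_self (by linarith : (0:ℝ) ≤ 2 * w r),
            ← Real.sqrt_mul (by norm_num : (0:ℝ) ≤ 3)]
          apply Real.sqrt_lt_sqrt (by positivity)
          nlinarith
        rw [sub_pos, div_lt_iff₀ hs0]
        linarith [key]
    -- φ is constant on I
    have hconst : ∀ x ∈ I, ∀ y ∈ I, x ≤ y → φ y = φ x := by
      intro x hx y hy hxy
      have hsub : Set.Icc x y ⊆ I := by
        rw [hI] at hx hy ⊢
        exact fun z hz => ⟨lt_of_lt_of_le hx.1 hz.1, lt_of_le_of_lt hz.2 hy.2⟩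
      have hcont : ContinuousOn φ (Set.Icc x y) := fun z hz =>
        ((hderiv z (hsub hz)).continuousAt).continuousWithinAt
      have hd : ∀ z ∈ Set.Ico x y, HasDerivWithinAt φ 0 (Set.Ici z) z := fun z hz =>
        (hderiv z (hsub ⟨hz.1, hz.2.le⟩)).hasDerivWithinAt
      exact constant_of_has_deriv_right_zero hcont hd y ⟨hxy, le_rfl⟩
    -- the base point
    set r₀ : ℝ := (a + b) / 2 with hr₀
    have hr₀I : r₀ ∈ I := by rw [hI]; constructor <;> [linarith; linarith]
    have hr₀0 : (0:ℝ) < r₀ := hIpos hr₀I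
    have hK : 0 < φ r₀ := div_pos (hval r₀ hr₀I) (by positivity)
    refine ⟨Real.sqrt (φ r₀), Real.sqrt_pos.mpr hK, ?_⟩
    intro r hr
    have hr0 : (0:ℝ) < r := hIpos hr
    have hφr : φ r = φ r₀ := by
      rcases le_total r r₀ with h | h
      · exact (hconst r hr r₀ hr₀I h).symm
      · exact hconst r₀ hr₀I r hr h
    have : Real.sqrt (φ r₀) ^ 2 = φ r₀ := Real.sq_sqrt hK.le
    rw [this, ← hφr]
    have : φ r = (Real.sqrt 3 - 2 * w r / Real.sqrt (1 + (w r) ^ 2)) / r ^ 2 := rfl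
    rw [this]
    field_simp
  · -- the interval is empty
    refine ⟨1, one_pos, fun r hr => absurd hr ?_⟩
    rw [hI, Set.Ioo_eq_empty hab]
    exact Set.notMem_empty r
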